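/- With the same setup as Lemma 1 (exact L-value for an M-PAM constellation with a bit pattern, ρ > 0 fixed), if l(y_0 + y) = l(y_0 - y) for all y ∈ ℝ, then the constellation is symmetric around y_0 and the pattern is reflection-symmetric. Concretely: writing the points of S_1 as d_1 < ... < d_{M/2} and the points of S_0 as t_1 < ... < t_{M/2}, the symmetry of l around y_0 implies d_i - y_0 = -(d_{M/2+1-i} - y_0) for all i and t_j - y_0 = -(t_{M/2+1-j} - y_0) for all j. -/

import Mathlib

open Real Finset

/-! ### Auxiliary machinery: exponential-sum evaluations of `AddMonoidAlgebra ℝ ℝ` -/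

instance : CoeFun (AddMonoidAlgebra ℝ ℝ) (fun _ => ℝ → ℝ) := ⟨fun w => w.coeff⟩

/-- Reflection of a finitely supported coefficient function: `reflect w x = w (-x)`. -/
noncomputable def reflect (w : AddMonoidAlgebra ℝ ℝ) : AddMonoidAlgebra ℝ ℝ :=
  .ofCoeff (Finsupp.mapDomain Neg.neg w.coeff)

lemma reflect_apply (w : AddMonoidAlgebra ℝ ℝ) (x : ℝ) : reflect w x = w (-x) := by
  conv_lhs => rw [show x = Neg.neg (-x) from (neg_neg x).symm]
  exact Finsupp.mapDomain_apply neg_injective w.coeff (-x)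

/-- The character `a ↦ exp (a * z)` of the additive group `ℝ`. -/
noncomputable def expChar (z : ℝ) : Multiplicative ℝ →* ℝ where
  toFun a := Real.exp (a.toAdd * z)
  map_one' := by simp
  map_mul' x y := by simp [add_mul, Real.exp_add]

/-- Evaluation of an element of the group algebra as an exponential sum. -/
noncomputable def ev (z : ℝ) : AddMonoidAlgebra ℝ ℝ →ₐ[ℝ] ℝ :=
  AddMonoidAlgebra.lift ℝ ℝ ℝ (expChar z)

lemma ev_apply (z : ℝ) (w : AddMonoidAlgebra ℝ ℝ) :
    ev z w = w.coeff.sum fun a r => r * Real.exp (a * z) := by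
  rw [ev, AddMonoidAlgebra.lift_apply]
  refine Finsupp.sum_congr fun a _ => ?_
  simp [expChar, smul_eq_mul]

lemma ev_single (z x r : ℝ) :
    ev z (AddMonoidAlgebra.single x r : AddMonoidAlgebra ℝ ℝ) = r * Real.exp (x * z) := by
  rw [ev_apply, AddMonoidAlgebra.coeff_single, Finsupp.sum_single_index]
  simp

lemma ev_reflect (z : ℝ) (w : AddMonoidAlgebra ℝ ℝ) : ev z (reflect w) = ev (-z) w := by
  rw [ev_apply, ev_apply, reflect, AddMonoidAlgebra.coeff_ofCoeff, Finsupp.sum_mapDomain_index]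
  · refine Finsupp.sum_congr fun a _ => ?_
    ring_nf
  · intro b; ring
  · intro b m₁ m₂; ring

/-- Linear independence of exponentials: an exponential sum vanishing identically
has zero coefficients. -/
lemma eq_zero_of_ev (w : AddMonoidAlgebra ℝ ℝ) (h : ∀ z, ev z w = 0) : w = 0 := by
  have hinj : Function.Injective (fun a : ℝ => expChar a) := by
    intro a a' he
    have := congrArg (fun φ : Multiplicative ℝ →* ℝ => φ (Multiplicative.ofAdd 1)) he
    simpa [expChar] using this
  have li : LinearIndependent ℝ (fun a : ℝ => ⇑(expChar a)) :=
    (linearIndependent_monoidHom (Multiplicative ℝ) ℝ).comp (fun a => expChar a) hinj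
  refine AddMonoidAlgebra.coeff_eq_zero.mp (linearIndependent_iff.mp li w.coeff ?_)
  rw [Finsupp.linearCombination_apply]
  funext m
  rw [show (Finsupp.sum w.coeff fun i a => a • ⇑(expChar i)) m
      = Finsupp.sum w.coeff fun i a => a • expChar i m from by
    rw [Finsupp.sum, Finsupp.sum, Finset.sum_apply]; rfl]
  have := h (Multiplicative.toAdd m)
  rw [ev_apply] at this
  rw [show (0 : Multiplicative ℝ → ℝ) m = 0 from rfl]
  rw [← this]
  refine Finsupp.sum_congr fun a _ => ?_
  simp [expChar, smul_eq_mul, mul_comm]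

/-! ### Leading coefficients of products -/

lemma mul_coeff_top (f g : AddMonoidAlgebra ℝ ℝ) (hf : f.coeff.support.Nonempty)
    (hg : g.coeff.support.Nonempty) :
    (f * g) (f.coeff.support.max' hf + g.coeff.support.max' hg) =
      f (f.coeff.support.max' hf) * g (g.coeff.support.max' hg) := by
  refine AddMonoidAlgebra.coeff_mul_add_of_uniqueAdd ?_
  intro a b ha hb hab
  have h1 : a ≤ f.coeff.support.max' hf := Finset.le_max' _ a ha
  have h2 : b ≤ g.coeff.support.max' hg := Finset.le_max' _ b hb
  constructor <;> [skip; skip] <;> by_contra hne <;>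
    [exact absurd hab (by have := lt_of_le_of_ne h1 hne; linarith);
     exact absurd hab (by have := lt_of_le_of_ne h2 hne; linarith)]

lemma mul_coeff_bound {f g : AddMonoidAlgebra ℝ ℝ} (hf : f.coeff.support.Nonempty)
    (hg : g.coeff.support.Nonempty) {x : ℝ} (hx : (f * g) x ≠ 0) :
    x ≤ f.coeff.support.max' hf + g.coeff.support.max' hg := by
  classical
  have hmem : x ∈ (f * g).coeff.support := Finsupp.mem_support_iff.mpr hx
  have := AddMonoidAlgebra.support_coeff_mul_subset f g hmem
  rw [Finset.mem_add] at this
  obtain ⟨u, hu, v, hv, rfl⟩ := this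
  exact add_le_add (Finset.le_max' _ u hu) (Finset.le_max' _ v hv)

lemma mul_eq_mul_top {f g f' g' : AddMonoidAlgebra ℝ ℝ} (hf : f.coeff.support.Nonempty)
    (hg : g.coeff.support.Nonempty) (hf' : f'.coeff.support.Nonempty) (hg' : g'.coeff.support.Nonempty)
    (h : f * g = f' * g') :
    f.coeff.support.max' hf + g.coeff.support.max' hg = f'.coeff.support.max' hf' + g'.coeff.support.max' hg' ∧
      f (f.coeff.support.max' hf) * g (g.coeff.support.max' hg) =
        f' (f'.coeff.support.max' hf') * g' (g'.coeff.support.max' hg') := by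
  have hne : (f * g) (f.coeff.support.max' hf + g.coeff.support.max' hg) ≠ 0 := by
    rw [mul_coeff_top f g hf hg]
    exact mul_ne_zero (Finsupp.mem_support_iff.mp (Finset.max'_mem _ hf))
      (Finsupp.mem_support_iff.mp (Finset.max'_mem _ hg))
  have hne' : (f' * g') (f'.coeff.support.max' hf' + g'.coeff.support.max' hg') ≠ 0 := by
    rw [mul_coeff_top f' g' hf' hg']
    exact mul_ne_zero (Finsupp.mem_support_iff.mp (Finset.max'_mem _ hf'))
      (Finsupp.mem_support_iff.mp (Finset.max'_mem _ hg'))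
  have h1 : f.coeff.support.max' hf + g.coeff.support.max' hg ≤
      f'.coeff.support.max' hf' + g'.coeff.support.max' hg' :=
    mul_coeff_bound hf' hg' (h ▸ hne)
  have h2 : f'.coeff.support.max' hf' + g'.coeff.support.max' hg' ≤
      f.coeff.support.max' hf + g.coeff.support.max' hg :=
    mul_coeff_bound hf hg (h.symm ▸ hne')
  have heq := le_antisymm h1 h2
  refine ⟨heq, ?_⟩
  rw [← mul_coeff_top f g hf hg, ← mul_coeff_top f' g' hf' hg', h, heq]

/-! ### Sums of singles -/

lemma sumsingle_apply {n : ℕ} (a : Fin n → ℝ) (c : Fin n → ℝ) (x : ℝ) :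
    (∑ i, AddMonoidAlgebra.single (a i) (c i) : AddMonoidAlgebra ℝ ℝ) x
      = ∑ i, if a i = x then c i else 0 := by
  rw [AddMonoidAlgebra.coeff_sum, Finsupp.finset_sum_apply]
  exact Finset.sum_congr rfl fun i _ => Finsupp.single_apply

lemma sumsingle_self {n : ℕ} {a : Fin n → ℝ} (hainj : Function.Injective a)
    (c : Fin n → ℝ) (i : Fin n) :
    (∑ i, AddMonoidAlgebra.single (a i) (c i) : AddMonoidAlgebra ℝ ℝ) (a i) = c i := by
  rw [sumsingle_apply, Finset.sum_eq_single i ?_ ?_, if_pos rfl]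
  · intro j _ hj; exact if_neg fun h => hj (hainj h)
  · intro h; exact absurd (Finset.mem_univ i) h

lemma sumsingle_ne {n : ℕ} (a : Fin n → ℝ) (c : Fin n → ℝ) {x : ℝ} (hx : ∀ i, a i ≠ x) :
    (∑ i, AddMonoidAlgebra.single (a i) (c i) : AddMonoidAlgebra ℝ ℝ) x = 0 := by
  rw [sumsingle_apply]
  exact Finset.sum_eq_zero fun i _ => if_neg (hx i)

/-! ### Small helpers -/

lemma quad_key {A a B b : ℝ} (h1 : A + a = B + b) (h2 : A^2 + b^2 = a^2 + B^2) :
    (B + b) * (A - B) = 0 := by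
  linear_combination (1/2) * h2 + ((B + b - A + a)/2) * h1

lemma sym_of_range {n : ℕ} {a : Fin n → ℝ} (ha : StrictMono a)
    (h : ∀ x : ℝ, (∃ i, a i = x) ↔ (∃ i, a i = -x)) : ∀ i, a i = -(a i.rev) := by
  have hg : StrictMono (fun i : Fin n => -(a i.rev)) := by
    intro i j hij
    have : j.rev < i.rev := Fin.rev_lt_rev.mpr hij
    simpa using neg_lt_neg (ha this)
  have hr : Set.range (fun i : Fin n => -(a i.rev)) = Set.range a := by
    ext x
    constructor
    · rintro ⟨i, rfl⟩
      rcases (h (-(a i.rev))).mpr ⟨i.rev, by rw [neg_neg]⟩ with ⟨j, hj⟩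
      exact ⟨j, hj⟩
    · rintro ⟨i, rfl⟩
      rcases (h (a i)).mp ⟨i, rfl⟩ with ⟨j, hj⟩
      exact ⟨j.rev, by simp only []; rw [Fin.rev_rev, hj, neg_neg]⟩
  haveI : WellFoundedLT (Fin n) := inferInstance
  have hfin := (hg.range_inj ha).mp hr
  intro i
  exact (congrFun hfin i).symm

/-! ### The core algebraic result -/

theorem core_symm (n : ℕ) (hn : 0 < n) (a b : Fin n → ℝ) (ha : StrictMono a)
    (hb : StrictMono b) (hab : ∀ i j, a i ≠ b j) (ρ : ℝ) (hρ : 0 < ρ)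
    (h2 : ∀ z : ℝ,
      (∑ i, Real.exp (-ρ * a i ^ 2) * Real.exp (a i * z)) *
        (∑ j, Real.exp (-ρ * b j ^ 2) * Real.exp (b j * (-z))) =
      (∑ i, Real.exp (-ρ * a i ^ 2) * Real.exp (a i * (-z))) *
        (∑ j, Real.exp (-ρ * b j ^ 2) * Real.exp (b j * z))) :
    (∀ i, a i = -(a i.rev)) ∧ (∀ j, b j = -(b j.rev)) := by
  classical
  set c : ℝ → ℝ := fun x => Real.exp (-ρ * x ^ 2) with hc
  have hcpos : ∀ x, 0 < c x := fun x => Real.exp_pos _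
  have hceven : ∀ x, c (-x) = c x := fun x => by rw [hc]; simp [neg_sq]
  set P : AddMonoidAlgebra ℝ ℝ := ∑ i, AddMonoidAlgebra.single (a i) (c (a i)) with hP
  set Q : AddMonoidAlgebra ℝ ℝ := ∑ j, AddMonoidAlgebra.single (b j) (c (b j)) with hQ
  have Pa : ∀ i, P (a i) = c (a i) := fun i => by
    rw [hP]; exact sumsingle_self ha.injective (fun i => c (a i)) i
  have Qb : ∀ j, Q (b j) = c (b j) := fun j => by
    rw [hQ]; exact sumsingle_self hb.injective (fun j => c (b j)) j
  have Pmem : ∀ x, P x ≠ 0 ↔ ∃ i, a i = x := by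
    intro x
    constructor
    · intro hx
      by_contra hno
      push_neg at hno
      exact hx (by rw [hP]; exact sumsingle_ne a _ hno)
    · rintro ⟨i, rfl⟩
      rw [Pa i]; exact ne_of_gt (hcpos _)
  have Qmem : ∀ x, Q x ≠ 0 ↔ ∃ j, b j = x := by
    intro x
    constructor
    · intro hx
      by_contra hno
      push_neg at hno
      exact hx (by rw [hQ]; exact sumsingle_ne b _ hno)
    · rintro ⟨j, rfl⟩
      rw [Qb j]; exact ne_of_gt (hcpos _)
  have Qcases : ∀ x, Q x = 0 ∨ Q x = c x := by
    intro x
    by_cases hx : ∃ j, b j = x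
    · obtain ⟨j, rfl⟩ := hx; exact Or.inr (Qb j)
    · left
      by_contra h0
      exact hx ((Qmem x).mp h0)
  have Pcases : ∀ x, P x = 0 ∨ P x = c x := by
    intro x
    by_cases hx : ∃ i, a i = x
    · obtain ⟨i, rfl⟩ := hx; exact Or.inr (Pa i)
    · left
      by_contra h0
      exact hx ((Pmem x).mp h0)
  -- index extremes
  set iT : Fin n := ⟨n - 1, by omega⟩ with hiT
  set i0 : Fin n := ⟨0, hn⟩ with hi0
  have haT : ∀ i, a i ≤ a iT := by
    intro i
    refine ha.monotone ?_
    rw [Fin.le_def, hiT]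
    exact Nat.le_pred_of_lt i.2
  have hbT : ∀ j, b j ≤ b iT := by
    intro j
    refine hb.monotone ?_
    rw [Fin.le_def, hiT]
    exact Nat.le_pred_of_lt j.2
  have ha0 : ∀ i, a i0 ≤ a i := by
    intro i
    refine ha.monotone ?_
    rw [Fin.le_def, hi0]
    exact Nat.zero_le _
  have hb0' : ∀ j, b i0 ≤ b j := by
    intro j
    refine hb.monotone ?_
    rw [Fin.le_def, hi0]
    exact Nat.zero_le _
  -- supports
  have hPsupp : P.coeff.support.Nonempty :=
    ⟨a iT, Finsupp.mem_support_iff.mpr ((Pmem _).mpr ⟨iT, rfl⟩)⟩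
  have hQsupp : Q.coeff.support.Nonempty :=
    ⟨b iT, Finsupp.mem_support_iff.mpr ((Qmem _).mpr ⟨iT, rfl⟩)⟩
  have hrPsupp : (reflect P).coeff.support.Nonempty :=
    ⟨-(a i0), Finsupp.mem_support_iff.mpr
      (by rw [reflect_apply, neg_neg]; exact (Pmem _).mpr ⟨i0, rfl⟩)⟩
  have hrQsupp : (reflect Q).coeff.support.Nonempty :=
    ⟨-(b i0), Finsupp.mem_support_iff.mpr
      (by rw [reflect_apply, neg_neg]; exact (Qmem _).mpr ⟨i0, rfl⟩)⟩
  have hPmax : P.coeff.support.max' hPsupp = a iT := by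
    apply le_antisymm
    · apply Finset.max'_le
      intro x hx
      obtain ⟨i, rfl⟩ := (Pmem x).mp (Finsupp.mem_support_iff.mp hx)
      exact haT i
    · exact Finset.le_max' _ _ (Finsupp.mem_support_iff.mpr ((Pmem _).mpr ⟨iT, rfl⟩))
  have hQmax : Q.coeff.support.max' hQsupp = b iT := by
    apply le_antisymm
    · apply Finset.max'_le
      intro x hx
      obtain ⟨j, rfl⟩ := (Qmem x).mp (Finsupp.mem_support_iff.mp hx)
      exact hbT j
    · exact Finset.le_max' _ _ (Finsupp.mem_support_iff.mpr ((Qmem _).mpr ⟨iT, rfl⟩))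
  have hrPmax : (reflect P).coeff.support.max' hrPsupp = -(a i0) := by
    apply le_antisymm
    · apply Finset.max'_le
      intro x hx
      have hx' := Finsupp.mem_support_iff.mp hx
      rw [reflect_apply] at hx'
      obtain ⟨i, hi⟩ := (Pmem _).mp hx'
      have h6 := ha0 i
      rw [hi] at h6
      linarith
    · refine Finset.le_max' _ _ (Finsupp.mem_support_iff.mpr ?_)
      rw [reflect_apply, neg_neg]
      exact (Pmem _).mpr ⟨i0, rfl⟩
  have hrQmax : (reflect Q).coeff.support.max' hrQsupp = -(b i0) := by
    apply le_antisymm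
    · apply Finset.max'_le
      intro x hx
      have hx' := Finsupp.mem_support_iff.mp hx
      rw [reflect_apply] at hx'
      obtain ⟨j, hj⟩ := (Qmem _).mp hx'
      have h6 := hb0' j
      rw [hj] at h6
      linarith
    · refine Finset.le_max' _ _ (Finsupp.mem_support_iff.mpr ?_)
      rw [reflect_apply, neg_neg]
      exact (Qmem _).mpr ⟨i0, rfl⟩
  -- the functional equation in the group algebra
  have evP : ∀ z, ev z P = ∑ i, c (a i) * Real.exp (a i * z) := by
    intro z
    rw [hP, map_sum]
    exact Finset.sum_congr rfl fun i _ => ev_single z (a i) (c (a i))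
  have evQ : ∀ z, ev z Q = ∑ j, c (b j) * Real.exp (b j * z) := by
    intro z
    rw [hQ, map_sum]
    exact Finset.sum_congr rfl fun j _ => ev_single z (b j) (c (b j))
  have hPQ : P * reflect Q = reflect P * Q := by
    rw [← sub_eq_zero]
    apply eq_zero_of_ev
    intro z
    rw [map_sub, map_mul, map_mul, ev_reflect, ev_reflect, evP z, evP (-z), evQ z,
      evQ (-z), sub_eq_zero]
    exact h2 z
  -- Step 1: outer symmetry
  obtain ⟨e1, e2⟩ := mul_eq_mul_top hPsupp hrQsupp hrPsupp hQsupp hPQ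
  rw [hPmax, hQmax, hrPmax, hrQmax] at e1 e2
  rw [Pa iT, Qb iT, reflect_apply, reflect_apply, neg_neg, neg_neg, Pa i0, Qb i0] at e2
  have sq1 : a iT ^ 2 + b i0 ^ 2 = a i0 ^ 2 + b iT ^ 2 := by
    simp only [hc] at e2
    rw [← Real.exp_add, ← Real.exp_add] at e2
    have h3 := Real.exp_eq_exp.mp e2
    have h4 : ρ * (a iT ^ 2 + b i0 ^ 2) = ρ * (a i0 ^ 2 + b iT ^ 2) := by linarith
    exact mul_left_cancel₀ (ne_of_gt hρ) h4
  have sum1 : a iT + a i0 = b iT + b i0 := by linarith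
  have hneT : a iT ≠ b iT := hab iT iT
  have key1 := quad_key sum1 sq1
  have hb0 : b i0 = -(b iT) := by
    rcases mul_eq_zero.mp key1 with h | h
    · linarith
    · exact absurd (by linarith : a iT = b iT) hneT
  -- Step 2: the antisymmetric parts vanish
  set D := P - reflect P with hDdef
  set E := Q - reflect Q with hEdef
  have hDE : P * E = D * Q := by rw [hEdef, hDdef, mul_sub, hPQ, sub_mul]
  have hEapp : ∀ x, E x = Q x - Q (-x) := fun x => by
    rw [hEdef, AddMonoidAlgebra.coeff_sub, Finsupp.sub_apply, reflect_apply]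
  have hDapp : ∀ x, D x = P x - P (-x) := fun x => by
    rw [hDdef, AddMonoidAlgebra.coeff_sub, Finsupp.sub_apply, reflect_apply]
  have hD0 : D = 0 := by
    by_contra hDne
    have hEne : E ≠ 0 := by
      intro h0
      rw [h0, mul_zero] at hDE
      rcases mul_eq_zero.mp hDE.symm with h | h
      · exact hDne h
      · exact Finsupp.support_nonempty_iff.mp hQsupp (AddMonoidAlgebra.coeff_eq_zero.mpr h)
    have hDs : D.coeff.support.Nonempty := Finsupp.support_nonempty_iff.mpr (mt AddMonoidAlgebra.coeff_eq_zero.mp hDne)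
    have hEs : E.coeff.support.Nonempty := Finsupp.support_nonempty_iff.mpr (mt AddMonoidAlgebra.coeff_eq_zero.mp hEne)
    obtain ⟨f1, f2⟩ := mul_eq_mul_top hPsupp hEs hDs hQsupp hDE
    rw [hPmax, hQmax] at f1 f2
    rw [Pa iT, Qb iT] at f2
    set δ := D.coeff.support.max' hDs with hδ
    set ε := E.coeff.support.max' hEs with hε
    have hEε : E ε ≠ 0 := Finsupp.mem_support_iff.mp (Finset.max'_mem _ hEs)
    have hDδ : D δ ≠ 0 := Finsupp.mem_support_iff.mp (Finset.max'_mem _ hDs)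
    have hEabs : |E ε| = c ε := by
      have hx := hEapp ε
      rcases Qcases ε with h1 | h1 <;> rcases Qcases (-ε) with h2 | h2 <;>
        rw [h1, h2] at hx
      · rw [sub_zero] at hx; exact absurd hx hEε
      · rw [hceven, zero_sub] at hx
        rw [hx, abs_neg, abs_of_pos (hcpos _)]
      · rw [sub_zero] at hx
        rw [hx, abs_of_pos (hcpos _)]
      · rw [hceven, sub_self] at hx; exact absurd hx hEε
    have hDabs : |D δ| = c δ := by
      have hx := hDapp δ
      rcases Pcases δ with h1 | h1 <;> rcases Pcases (-δ) with h2 | h2 <;>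
        rw [h1, h2] at hx
      · rw [sub_zero] at hx; exact absurd hx hDδ
      · rw [hceven, zero_sub] at hx
        rw [hx, abs_neg, abs_of_pos (hcpos _)]
      · rw [sub_zero] at hx
        rw [hx, abs_of_pos (hcpos _)]
      · rw [hceven, sub_self] at hx; exact absurd hx hDδ
    have habs : c (a iT) * c ε = c δ * c (b iT) := by
      have h5 : |c (a iT) * E ε| = |D δ * c (b iT)| := congrArg abs f2
      rwa [abs_mul, abs_mul, hEabs, hDabs, abs_of_pos (hcpos _), abs_of_pos (hcpos _)] at h5
    have sq2 : a iT ^ 2 + ε ^ 2 = δ ^ 2 + b iT ^ 2 := by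
      simp only [hc] at habs
      rw [← Real.exp_add, ← Real.exp_add] at habs
      have h3 := Real.exp_eq_exp.mp habs
      have h4 : ρ * (a iT ^ 2 + ε ^ 2) = ρ * (δ ^ 2 + b iT ^ 2) := by linarith
      exact mul_left_cancel₀ (ne_of_gt hρ) h4
    have sum2 : a iT + -δ = b iT + -ε := by linarith
    have sq2' : a iT ^ 2 + (-ε) ^ 2 = (-δ) ^ 2 + b iT ^ 2 := by linear_combination sq2
    have key2 := quad_key sum2 sq2'
    have hεb : ε = b iT := by
      rcases mul_eq_zero.mp key2 with h | h
      · linarith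
      · exact absurd (by linarith : a iT = b iT) hneT
    apply hEε
    rw [hεb, hEapp (b iT), ← hb0, Qb iT, Qb i0, hb0, hceven, sub_self]
  have hE0 : E = 0 := by
    rw [hD0, zero_mul] at hDE
    rcases mul_eq_zero.mp hDE with h | h
    · exact absurd (AddMonoidAlgebra.coeff_eq_zero.mpr h) (Finsupp.support_nonempty_iff.mp hPsupp)
    · exact h
  have hPr : ∀ x, P x = P (-x) := by
    intro x
    have h0 : D x = 0 := by rw [hD0]; rfl
    rw [hDapp, sub_eq_zero] at h0
    exact h0
  have hQr : ∀ x, Q x = Q (-x) := by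
    intro x
    have h0 : E x = 0 := by rw [hE0]; rfl
    rw [hEapp, sub_eq_zero] at h0
    exact h0
  refine ⟨sym_of_range ha fun x => ?_, sym_of_range hb fun x => ?_⟩
  · rw [← Pmem x, ← Pmem (-x), hPr x]
  · rw [← Qmem x, ← Qmem (-x), hQr x]

/-- Lemma 1 ("only if" direction): if the exact L-value is symmetric around `y0`,
then the constellation is symmetric around `y0` and the pattern is
reflection-symmetric. -/
theorem symm_of_exact_lvalue_symm (n : ℕ) (hn : 0 < n) (d t : Fin n → ℝ)
    (hd : StrictMono d) (ht : StrictMono t) (hdt : ∀ i j, d i ≠ t j)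
    (ρ y0 : ℝ) (hρ : 0 < ρ)
    (hsymm : ∀ y : ℝ,
      Real.log ((∑ i, Real.exp (-ρ * (y0 + y - d i) ^ 2)) /
          (∑ j, Real.exp (-ρ * (y0 + y - t j) ^ 2)))
        = Real.log ((∑ i, Real.exp (-ρ * (y0 - y - d i) ^ 2)) /
          (∑ j, Real.exp (-ρ * (y0 - y - t j) ^ 2)))) :
    (∀ i : Fin n, d i - y0 = -(d i.rev - y0)) ∧
      (∀ j : Fin n, t j - y0 = -(t j.rev - y0)) := by
  haveI : Nonempty (Fin n) := ⟨⟨0, hn⟩⟩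
  set a : Fin n → ℝ := fun i => d i - y0 with haDef
  set b : Fin n → ℝ := fun j => t j - y0 with hbDef
  have ha : StrictMono a := fun i j hij => by
    simp only [haDef]
    exact sub_lt_sub_right (hd hij) y0
  have hb : StrictMono b := fun i j hij => by
    simp only [hbDef]
    exact sub_lt_sub_right (ht hij) y0
  have hab : ∀ i j, a i ≠ b j := by
    intro i j h
    apply hdt i j
    simp only [haDef, hbDef] at h
    linarith
  have hpos : ∀ u : Fin n → ℝ, 0 < ∑ i, Real.exp (-ρ * u i ^ 2) := fun u =>
    Finset.sum_pos (fun i _ => Real.exp_pos _) Finset.univ_nonempty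
  have h1 : ∀ y : ℝ,
      (∑ i, Real.exp (-ρ * (y - a i) ^ 2)) * (∑ j, Real.exp (-ρ * (-y - b j) ^ 2)) =
      (∑ i, Real.exp (-ρ * (-y - a i) ^ 2)) * (∑ j, Real.exp (-ρ * (y - b j) ^ 2)) := by
    intro y
    have e1 : ∑ i, Real.exp (-ρ * (y0 + y - d i) ^ 2) = ∑ i, Real.exp (-ρ * (y - a i) ^ 2) :=
      Finset.sum_congr rfl fun i _ => by simp only [haDef]; congr 1; ring
    have e2 : ∑ j, Real.exp (-ρ * (y0 + y - t j) ^ 2) = ∑ j, Real.exp (-ρ * (y - b j) ^ 2) :=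
      Finset.sum_congr rfl fun j _ => by simp only [hbDef]; congr 1; ring
    have e3 : ∑ i, Real.exp (-ρ * (y0 - y - d i) ^ 2) = ∑ i, Real.exp (-ρ * (-y - a i) ^ 2) :=
      Finset.sum_congr rfl fun i _ => by simp only [haDef]; congr 1; ring
    have e4 : ∑ j, Real.exp (-ρ * (y0 - y - t j) ^ 2) = ∑ j, Real.exp (-ρ * (-y - b j) ^ 2) :=
      Finset.sum_congr rfl fun j _ => by simp only [hbDef]; congr 1; ring
    have h0 := hsymm y
    rw [e1, e2, e3, e4] at h0
    have hq := Real.log_injOn_pos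
      (Set.mem_Ioi.mpr (div_pos (hpos fun i => y - a i) (hpos fun j => y - b j)))
      (Set.mem_Ioi.mpr (div_pos (hpos fun i => -y - a i) (hpos fun j => -y - b j))) h0
    exact (div_eq_div_iff (ne_of_gt (hpos fun j => y - b j))
      (ne_of_gt (hpos fun j => -y - b j))).mp hq
  have hexp : ∀ x y : ℝ, Real.exp (-ρ * (y - x) ^ 2)
      = Real.exp (-ρ * y ^ 2) * (Real.exp (-ρ * x ^ 2) * Real.exp (x * (2 * ρ * y))) := by
    intro x y
    rw [← Real.exp_add, ← Real.exp_add]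
    congr 1
    ring
  have h2 : ∀ z : ℝ,
      (∑ i, Real.exp (-ρ * a i ^ 2) * Real.exp (a i * z)) *
        (∑ j, Real.exp (-ρ * b j ^ 2) * Real.exp (b j * (-z))) =
      (∑ i, Real.exp (-ρ * a i ^ 2) * Real.exp (a i * (-z))) *
        (∑ j, Real.exp (-ρ * b j ^ 2) * Real.exp (b j * z)) := by
    intro z
    have hy : 2 * ρ * (z / (2 * ρ)) = z := by field_simp
    have hyneg : 2 * ρ * (-(z / (2 * ρ))) = -z := by rw [mul_neg, hy]
    set y := z / (2 * ρ) with hydef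
    have r1 : ∑ i, Real.exp (-ρ * (y - a i) ^ 2)
        = Real.exp (-ρ * y ^ 2) * ∑ i, Real.exp (-ρ * a i ^ 2) * Real.exp (a i * z) := by
      rw [Finset.mul_sum]
      exact Finset.sum_congr rfl fun i _ => by rw [hexp (a i) y, hy]
    have r2 : ∑ j, Real.exp (-ρ * (y - b j) ^ 2)
        = Real.exp (-ρ * y ^ 2) * ∑ j, Real.exp (-ρ * b j ^ 2) * Real.exp (b j * z) := by
      rw [Finset.mul_sum]
      exact Finset.sum_congr rfl fun j _ => by rw [hexp (b j) y, hy]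
    have r3 : ∑ i, Real.exp (-ρ * (-y - a i) ^ 2)
        = Real.exp (-ρ * y ^ 2) * ∑ i, Real.exp (-ρ * a i ^ 2) * Real.exp (a i * (-z)) := by
      rw [Finset.mul_sum]
      exact Finset.sum_congr rfl fun i _ => by rw [hexp (a i) (-y), hyneg, neg_sq]
    have r4 : ∑ j, Real.exp (-ρ * (-y - b j) ^ 2)
        = Real.exp (-ρ * y ^ 2) * ∑ j, Real.exp (-ρ * b j ^ 2) * Real.exp (b j * (-z)) := by
      rw [Finset.mul_sum]
      exact Finset.sum_congr rfl fun j _ => by rw [hexp (b j) (-y), hyneg, neg_sq]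
    have E := h1 y
    rw [r1, r2, r3, r4] at E
    have hcan : Real.exp (-ρ * y ^ 2) * Real.exp (-ρ * y ^ 2) ≠ 0 := by positivity
    apply mul_left_cancel₀ hcan
    linear_combination E
  obtain ⟨cA, cB⟩ := core_symm n hn a b ha hb hab ρ hρ h2
  constructor
  · intro i
    have := cA i
    simp only [haDef] at this
    exact this
  · intro j
    have := cB j
    simp only [hbDef] at this
    exact this
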